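/- Suppose each player k has a concave valuation v_k : ℝ^m → ℝ, nonnegative on nonnegative bundles, and let x* be a feasible allocation maximizing Π_k v_k(x_k)^{b_k} over all feasible allocations, with v_k(x*_k) > 0 for every k. Then x* satisfies the Proportional Fairness inequality: for every feasible allocation x', Σ_k b_k·(v_k(x'_k) − v_k(x*_k))/v_k(x*_k) ≤ 0. -/

import Mathlib

open Finset

private lemma log_lower (s : ℝ) (hs : -(1/2 : ℝ) ≤ s) :
    s - 2 * s ^ 2 ≤ Real.log (1 + s) := by
  have h1 : (0:ℝ) < 1 + s := by linarith
  have h2 : Real.log (1+s)⁻¹ ≤ (1+s)⁻¹ - 1 :=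
    Real.log_le_sub_one_of_pos (by positivity)
  rw [Real.log_inv] at h2
  have h3 : 1 - (1+s)⁻¹ ≤ Real.log (1+s) := by linarith
  have h4 : s - 2 * s ^ 2 ≤ s / (1 + s) := by
    rw [le_div_iff₀ h1]
    nlinarith [sq_nonneg s, mul_nonneg (sq_nonneg s) (by linarith : (0:ℝ) ≤ 1 + 2*s)]
  have h5 : s / (1 + s) = 1 - (1 + s)⁻¹ := by field_simp; ring
  linarith

/-- A maximizer of the weighted Nash product over the (convex) set of
feasible allocations satisfies the Proportional Fairness inequality: for every feasible
allocation `x'`, `∑_k b_k·(v_k(x'_k) − v_k(x*_k))/v_k(x*_k) ≤ 0`. -/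
theorem stmt_14 {n m : ℕ}
    (v : Fin n → (Fin m → ℝ) → ℝ) (b : Fin n → ℝ)
    (hb : ∀ k, 1 ≤ b k)
    (hv_nonneg : ∀ k (y : Fin m → ℝ), (∀ j, 0 ≤ y j) → 0 ≤ v k y)
    (hv_concave : ∀ k, ConcaveOn ℝ Set.univ (v k))
    (xstar : Fin n → Fin m → ℝ)
    (hxstar_nonneg : ∀ k j, 0 ≤ xstar k j) (hxstar_feas : ∀ j, ∑ k, xstar k j ≤ 1)
    (hxstar_max : ∀ x : Fin n → Fin m → ℝ,
      (∀ k j, 0 ≤ x k j) → (∀ j, ∑ k, x k j ≤ 1) →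
      ∏ k, v k (x k) ^ b k ≤ ∏ k, v k (xstar k) ^ b k)
    (hpos : ∀ k, 0 < v k (xstar k)) :
    ∀ x' : Fin n → Fin m → ℝ,
      (∀ k j, 0 ≤ x' k j) → (∀ j, ∑ k, x' k j ≤ 1) →
      ∑ k, b k * (v k (x' k) - v k (xstar k)) / v k (xstar k) ≤ 0 := by
  intro x' hx'_nonneg hx'_feas
  set u : Fin n → ℝ := fun k => (v k (x' k) - v k (xstar k)) / v k (xstar k) with hu_def
  have hv'_nonneg : ∀ k, 0 ≤ v k (x' k) := fun k => hv_nonneg k _ (hx'_nonneg k)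
  have hu_ge : ∀ k, -1 ≤ u k := by
    intro k
    rw [hu_def]
    rw [le_div_iff₀ (hpos k)]
    have := hv'_nonneg k
    linarith
  -- key inequality for each small t
  have key : ∀ t : ℝ, 0 < t → t ≤ 1/2 → ∑ k, b k * Real.log (1 + t * u k) ≤ 0 := by
    intro t ht ht2
    have hcp : ∀ k, 0 < 1 + t * u k := by
      intro k
      have h1 : t * (-1) ≤ t * u k := mul_le_mul_of_nonneg_left (hu_ge k) ht.le
      nlinarith
    set xt : Fin n → Fin m → ℝ := fun k j => (1 - t) * xstar k j + t * x' k j with hxt_def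
    have hxt_nonneg : ∀ k j, 0 ≤ xt k j := by
      intro k j
      have := hxstar_nonneg k j
      have := hx'_nonneg k j
      have h1 : (0:ℝ) ≤ 1 - t := by linarith
      simp only [hxt_def]
      positivity
    have hxt_feas : ∀ j, ∑ k, xt k j ≤ 1 := by
      intro j
      simp only [hxt_def]
      rw [Finset.sum_add_distrib, ← Finset.mul_sum, ← Finset.mul_sum]
      have h1 : (0:ℝ) ≤ 1 - t := by linarith
      nlinarith [hxstar_feas j, hx'_feas j,
        mul_le_mul_of_nonneg_left (hxstar_feas j) h1,
        mul_le_mul_of_nonneg_left (hx'_feas j) ht.le]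
    have hcomb : ∀ k, (1 - t) * v k (xstar k) + t * v k (x' k) ≤ v k (xt k) := by
      intro k
      have := (hv_concave k).2 (Set.mem_univ (xstar k)) (Set.mem_univ (x' k))
        (by linarith : (0:ℝ) ≤ 1 - t) ht.le (by ring)
      have e : (1 - t) • xstar k + t • x' k = xt k := by
        funext j; simp [hxt_def, smul_eq_mul]
      rw [e] at this
      simpa [smul_eq_mul] using this
    have hlin_eq : ∀ k, (1 - t) * v k (xstar k) + t * v k (x' k)
        = v k (xstar k) * (1 + t * u k) := by
      intro k
      have h0 := (hpos k).ne'
      rw [hu_def]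
      field_simp
      ring
    have hlin_pos : ∀ k, 0 < (1 - t) * v k (xstar k) + t * v k (x' k) := by
      intro k; rw [hlin_eq k]; exact mul_pos (hpos k) (hcp k)
    have hxt_pos : ∀ k, 0 < v k (xt k) := fun k => lt_of_lt_of_le (hlin_pos k) (hcomb k)
    -- product chain
    have hprod1 : ∏ k, ((1 - t) * v k (xstar k) + t * v k (x' k)) ^ b k
        ≤ ∏ k, v k (xt k) ^ b k := by
      apply Finset.prod_le_prod
      · intro k _; exact Real.rpow_nonneg (hlin_pos k).le _
      · intro k _
        exact Real.rpow_le_rpow (hlin_pos k).le (hcomb k) (by linarith [hb k])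
    have hprod2 := hxstar_max xt hxt_nonneg hxt_feas
    have hprod : ∏ k, ((1 - t) * v k (xstar k) + t * v k (x' k)) ^ b k
        ≤ ∏ k, v k (xstar k) ^ b k := le_trans hprod1 hprod2
    -- take logs
    have hlog : ∑ k, b k * Real.log ((1 - t) * v k (xstar k) + t * v k (x' k))
        ≤ ∑ k, b k * Real.log (v k (xstar k)) := by
      have hL : Real.log (∏ k, ((1 - t) * v k (xstar k) + t * v k (x' k)) ^ b k)
          = ∑ k, b k * Real.log ((1 - t) * v k (xstar k) + t * v k (x' k)) := by
        rw [Real.log_prod]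
        · exact Finset.sum_congr rfl fun k _ => Real.log_rpow (hlin_pos k) _
        · intro k _; exact (Real.rpow_pos_of_pos (hlin_pos k) _).ne'
      have hR : Real.log (∏ k, v k (xstar k) ^ b k)
          = ∑ k, b k * Real.log (v k (xstar k)) := by
        rw [Real.log_prod]
        · exact Finset.sum_congr rfl fun k _ => Real.log_rpow (hpos k) _
        · intro k _; exact (Real.rpow_pos_of_pos (hpos k) _).ne'
      rw [← hL, ← hR]
      exact Real.log_le_log (Finset.prod_pos fun k _ => Real.rpow_pos_of_pos (hlin_pos k) _) hprod
    have hsplit : ∀ k, Real.log ((1 - t) * v k (xstar k) + t * v k (x' k))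
        = Real.log (v k (xstar k)) + Real.log (1 + t * u k) := by
      intro k
      rw [hlin_eq k, Real.log_mul (hpos k).ne' (hcp k).ne']
    calc ∑ k, b k * Real.log (1 + t * u k)
        = ∑ k, b k * Real.log ((1 - t) * v k (xstar k) + t * v k (x' k))
          - ∑ k, b k * Real.log (v k (xstar k)) := by
          rw [← Finset.sum_sub_distrib]
          refine Finset.sum_congr rfl fun k _ => ?_
          rw [hsplit k]; ring
      _ ≤ 0 := by linarith
  -- now the limit argument
  set S : ℝ := ∑ k, b k * u k with hS_def
  set C : ℝ := ∑ k, b k * u k ^ 2 with hC_def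
  have hC_nonneg : 0 ≤ C := Finset.sum_nonneg fun k _ =>
    mul_nonneg (by linarith [hb k]) (sq_nonneg _)
  have hStC : ∀ t : ℝ, 0 < t → t ≤ 1/2 → S ≤ 2 * t * C := by
    intro t ht ht2
    have h1 := key t ht ht2
    have h2 : ∑ k, b k * (t * u k - 2 * (t * u k) ^ 2) ≤ ∑ k, b k * Real.log (1 + t * u k) := by
      apply Finset.sum_le_sum
      intro k _
      apply mul_le_mul_of_nonneg_left _ (by linarith [hb k])
      apply log_lower
      have h1 : t * (-1) ≤ t * u k := mul_le_mul_of_nonneg_left (hu_ge k) ht.le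
      nlinarith
    have h3 : ∑ k, b k * (t * u k - 2 * (t * u k) ^ 2) = t * S - 2 * t ^ 2 * C := by
      rw [hS_def, hC_def, Finset.mul_sum, Finset.mul_sum, ← Finset.sum_sub_distrib]
      refine Finset.sum_congr rfl fun k _ => ?_
      ring
    rw [h3] at h2
    nlinarith
  -- conclude S ≤ 0
  have hgoal : S ≤ 0 := by
    by_contra h
    push_neg at h
    set t : ℝ := min (1/2) (S / (4 * (C + 1))) with ht_def
    have ht_pos : 0 < t := lt_min (by norm_num) (by positivity)
    have ht_le : t ≤ 1/2 := min_le_left _ _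
    have ht_le2 : t ≤ S / (4 * (C + 1)) := min_le_right _ _
    have := hStC t ht_pos ht_le
    have hd : (0:ℝ) < 4 * (C + 1) := by linarith
    have h5 : t * (4 * (C + 1)) ≤ S := by
      rw [← div_mul_cancel₀ S hd.ne']
      exact mul_le_mul_of_nonneg_right ht_le2 hd.le
    nlinarith
  calc ∑ k, b k * (v k (x' k) - v k (xstar k)) / v k (xstar k)
      = S := by
        rw [hS_def]
        exact Finset.sum_congr rfl fun k _ => by rw [hu_def, mul_div_assoc]
    _ ≤ 0 := hgoal
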